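/- Pairwise upper bound lemma (the m = 1 case proven in the PNS(k) upper-bound proof): for every pair of distinct indices t_0, t_1 ∈ {1,…,k}, P(⋂_{j=1}^{k} {Y_j = j}) ≤ P(Y_{t_0} = t_0) + P(Y_{t_1} = t_1) − P(X = t_0, Y = t_0) − P(X = t_1, Y = t_1). -/
import Mathlib


open MeasureTheory

theorem pns_k_pairwise_upper_bound
    {Ω : Type*} [MeasurableSpace Ω] (P : Measure Ω) [IsProbabilityMeasure P]
    (n k : ℕ) (hk1 : 1 ≤ k) (hkn : k ≤ n)
    (X : Ω → ℕ) (Y : ℕ → Ω → ℕ) (Yobs : Ω → ℕ)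
    (hX : Measurable X) (hY : ∀ j, Measurable (Y j))
    (hXr : ∀ ω, X ω ∈ Finset.Icc 1 n)
    (hYr : ∀ j ω, Y j ω ∈ Finset.Icc 1 n)
    (hcons : ∀ ω, Yobs ω = Y (X ω) ω) :
    ∀ t₀ ∈ Finset.Icc 1 k, ∀ t₁ ∈ Finset.Icc 1 k, t₀ ≠ t₁ →
      (P (⋂ j ∈ Finset.Icc 1 k, {ω | Y j ω = j})).toReal ≤
        (P {ω | Y t₀ ω = t₀}).toReal + (P {ω | Y t₁ ω = t₁}).toReal - (P {ω | X ω = t₀ ∧ Yobs ω = t₀}).toReal - (P {ω | X ω = t₁ ∧ Yobs ω = t₁}).toReal := by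
  intro t₀ ht₀ t₁ ht₁ hne
  set A : Set Ω := {ω | Y t₀ ω = t₀} with hA
  set B : Set Ω := {ω | Y t₁ ω = t₁} with hB
  have hE₀ : {ω | X ω = t₀ ∧ Yobs ω = t₀} = {ω | X ω = t₀ ∧ Y t₀ ω = t₀} := by
    ext ω; simp only [Set.mem_setOf_eq]
    constructor <;> rintro ⟨h1, h2⟩ <;> exact ⟨h1, by simpa [hcons ω, h1] using h2⟩
  have hE₁ : {ω | X ω = t₁ ∧ Yobs ω = t₁} = {ω | X ω = t₁ ∧ Y t₁ ω = t₁} := by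
    ext ω; simp only [Set.mem_setOf_eq]
    constructor <;> rintro ⟨h1, h2⟩ <;> exact ⟨h1, by simpa [hcons ω, h1] using h2⟩
  rw [hE₀, hE₁]
  set E₀ : Set Ω := {ω | X ω = t₀ ∧ Y t₀ ω = t₀} with hE0d
  set E₁ : Set Ω := {ω | X ω = t₁ ∧ Y t₁ ω = t₁} with hE1d
  have mA : MeasurableSet A := (hY t₀) (measurableSet_singleton t₀)
  have mB : MeasurableSet B := (hY t₁) (measurableSet_singleton t₁)
  have mE₀ : MeasurableSet E₀ :=
    (hX (measurableSet_singleton t₀)).inter ((hY t₀) (measurableSet_singleton t₀))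
  have mE₁ : MeasurableSet E₁ :=
    (hX (measurableSet_singleton t₁)).inter ((hY t₁) (measurableSet_singleton t₁))
  have hdisj : Disjoint E₀ E₁ := by
    rw [Set.disjoint_left]
    rintro ω ⟨h0, _⟩ ⟨h1, _⟩
    exact hne (h0 ▸ h1)
  -- big intersection ⊆ A ∩ B
  have hsub : (⋂ j ∈ Finset.Icc 1 k, {ω | Y j ω = j}) ⊆ A ∩ B := by
    intro ω hω
    simp only [Set.mem_iInter] at hω
    exact ⟨hω t₀ ht₀, hω t₁ ht₁⟩
  have h1 : P (⋂ j ∈ Finset.Icc 1 k, {ω | Y j ω = j}) ≤ P (A ∩ B) := measure_mono hsub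
  have hsub2 : E₀ ∪ E₁ ⊆ A ∪ B := by
    rintro ω (⟨_, h⟩ | ⟨_, h⟩)
    · exact Or.inl h
    · exact Or.inr h
  have h2 : P E₀ + P E₁ ≤ P (A ∪ B) := by
    rw [← measure_union hdisj mE₁]
    exact measure_mono hsub2
  have h3 : P (A ∪ B) + P (A ∩ B) = P A + P B := measure_union_add_inter A mB
  have key : P (⋂ j ∈ Finset.Icc 1 k, {ω | Y j ω = j}) + P E₀ + P E₁ ≤ P A + P B := by
    calc P (⋂ j ∈ Finset.Icc 1 k, {ω | Y j ω = j}) + P E₀ + P E₁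
        ≤ P (A ∩ B) + (P E₀ + P E₁) := by rw [add_assoc]; exact add_le_add h1 le_rfl
      _ ≤ P (A ∩ B) + P (A ∪ B) := add_le_add le_rfl h2
      _ = P A + P B := by rw [add_comm, h3]
  have fin : ∀ s : Set Ω, P s ≠ ⊤ := fun s => measure_ne_top P s
  have key' := ENNReal.toReal_mono (by simp [fin]) key
  rw [ENNReal.toReal_add (by simp [fin]) (fin _), ENNReal.toReal_add (fin _) (fin _),
    ENNReal.toReal_add (fin _) (fin _)] at key'
  linarith
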